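/- Let k be an infinite field, n ≥ 1, l ≥ 2, and let I be an ideal of k[X_1,…,X_n] with ⟨X_1,…,X_n⟩^l ⊆ I ⊆ ⟨X_1,…,X_n⟩². Then I is generated by monomials if and only if for every (a_1,…,a_n) ∈ (k^×)^n the k-algebra endomorphism of k[X_1,…,X_n] sending X_i ↦ a_i X_i for every i maps I into I. -/

import Mathlib

open MvPolynomial

set_option linter.unusedSectionVars false

section Helpers

variable {k : Type*} [Field k] [Infinite k] {n : ℕ}


variable {k : Type*} [Field k] [Infinite k] {n : ℕ}

noncomputable def chi (a : Fin n → kˣ) (e : Fin n →₀ ℕ) : k :=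
  e.prod fun i m => (a i : k) ^ m

lemma chi_ne_zero (a : Fin n → kˣ) (e : Fin n →₀ ℕ) : chi a e ≠ 0 := by
  apply Finset.prod_ne_zero_iff.mpr
  intro i _
  exact pow_ne_zero _ (a i).ne_zero

lemma phi_monomial (a : Fin n → kˣ) (e : Fin n →₀ ℕ) (c : k) :
    aeval (fun i => (a i : k) • X i) (monomial e c) = monomial e (chi a e * c) := by
  rw [aeval_monomial]
  have h : (e.prod fun i m => ((a i : k) • X i) ^ m)
      = C (chi a e) * monomial e 1 := by
    rw [chi, Finsupp.prod, Finsupp.prod, monomial_eq]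
    simp only [map_one, one_mul, Finsupp.prod, map_prod, ← Finset.prod_mul_distrib]
    apply Finset.prod_congr rfl
    intro i _
    rw [smul_pow, smul_eq_C_mul, map_pow]
  rw [h, algebraMap_eq, ← mul_assoc, ← C_mul, mul_comm c, C_mul_monomial, mul_one]

lemma coeff_phi (a : Fin n → kˣ) (f : MvPolynomial (Fin n) k) (e : Fin n →₀ ℕ) :
    coeff e (aeval (fun i => (a i : k) • X i) f) = chi a e * coeff e f := by
  induction f using MvPolynomial.induction_on' with
  | monomial d c =>
    rw [phi_monomial, coeff_monomial, coeff_monomial]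
    split
    · subst ‹d = e›; ring
    · ring
  | add p q hp hq => rw [map_add, coeff_add, coeff_add, hp, hq]; ring

lemma exists_sep {e e' : Fin n →₀ ℕ} (h : e ≠ e') :
    ∃ a : Fin n → kˣ, chi a e ≠ chi a e' := by
  obtain ⟨i, hi⟩ := Finsupp.ne_iff.mp h
  have ht : ∃ t : k, t ≠ 0 ∧ t ^ e i ≠ t ^ e' i := by
    have hp : (Polynomial.X ^ e i - Polynomial.X ^ e' i : Polynomial k) ≠ 0 := by
      intro hzero
      apply hi
      have h2 := sub_eq_zero.mp hzero
      have : (Polynomial.X ^ e i : Polynomial k).natDegree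
          = (Polynomial.X ^ e' i : Polynomial k).natDegree := by rw [h2]
      simpa [Polynomial.natDegree_X_pow] using this
    have hfin : ({0} ∪ {x : k | Polynomial.IsRoot (Polynomial.X ^ e i - Polynomial.X ^ e' i) x}).Finite :=
      (Set.finite_singleton 0).union (Polynomial.finite_setOf_isRoot hp)
    obtain ⟨t, ht⟩ := (hfin.infinite_compl).nonempty
    refine ⟨t, ?_, ?_⟩
    · intro h0; exact ht (Or.inl h0)
    · intro heq
      apply ht
      right
      simp [Polynomial.IsRoot, sub_eq_zero, heq]
  obtain ⟨t, ht0, htne⟩ := ht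
  refine ⟨fun j => if j = i then Units.mk0 t ht0 else 1, ?_⟩
  have key : ∀ d : Fin n →₀ ℕ,
      chi (fun j => if j = i then Units.mk0 t ht0 else 1) d = t ^ d i := by
    intro d
    rw [chi]
    rw [Finsupp.prod_eq_single i]
    · simp
    · intro b _ hb; simp [hb]
    · intro hd; simp [hd]
  rw [key, key]
  exact htne

lemma mono_mem (I : Ideal (MvPolynomial (Fin n) k))
    (hinv : ∀ a : Fin n → kˣ, ∀ g ∈ I, aeval (fun i => (a i : k) • X i) g ∈ I) :
    ∀ (N : ℕ) (f : MvPolynomial (Fin n) k), f.support.card ≤ N → f ∈ I →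
      ∀ e ∈ f.support, monomial e (coeff e f) ∈ I := by
  intro N
  induction N with
  | zero =>
    intro f hcard _ e he
    rw [Nat.le_zero, Finset.card_eq_zero] at hcard
    simp [hcard] at he
  | succ N ih =>
    intro f hcard hf e he
    by_cases hsub : ∃ e' ∈ f.support, e' ≠ e
    · obtain ⟨e', he', hne⟩ := hsub
      obtain ⟨a, ha⟩ := exists_sep (n := n) (k := k) (Ne.symm hne)
      set g := aeval (fun i => (a i : k) • X i) f - C (chi a e') * f with hg
      have hgI : g ∈ I := sub_mem (hinv a f hf) (Ideal.mul_mem_left _ _ hf)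
      have hcoeff : ∀ d, coeff d g = (chi a d - chi a e') * coeff d f := by
        intro d
        rw [hg, coeff_sub, coeff_phi, coeff_C_mul]
        ring
      have hsupp : g.support ⊆ f.support.erase e' := by
        intro d hd
        rw [mem_support_iff, hcoeff] at hd
        rw [Finset.mem_erase, mem_support_iff]
        constructor
        · intro hde'; apply hd; rw [hde']; ring
        · intro h0; apply hd; rw [h0]; ring
      have hcard' : g.support.card ≤ N := by
        calc g.support.card ≤ (f.support.erase e').card := Finset.card_le_card hsupp
        _ = f.support.card - 1 := Finset.card_erase_of_mem he'
        _ ≤ N := by omega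
      have heg : e ∈ g.support := by
        rw [mem_support_iff, hcoeff]
        exact mul_ne_zero (sub_ne_zero.mpr ha) (mem_support_iff.mp he)
      have := ih g hcard' hgI e heg
      rw [hcoeff] at this
      have h2 : monomial e (coeff e f)
          = C (chi a e - chi a e')⁻¹ * monomial e ((chi a e - chi a e') * coeff e f) := by
        rw [C_mul_monomial, ← mul_assoc, inv_mul_cancel₀ (sub_ne_zero.mpr ha), one_mul]
      rw [h2]
      exact Ideal.mul_mem_left _ _ this
    · push_neg at hsub
      have : f = monomial e (coeff e f) := by
        conv_lhs => rw [← support_sum_monomial_coeff f]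
        rw [Finset.sum_eq_single e]
        · intro b hb hbe; exact absurd (hsub b hb) hbe
        · intro habs; exact absurd he habs
      rw [← this]; exact hf


end Helpers

/-- A *monomial*: a polynomial of the form `c·X_1^{e_1}⋯X_n^{e_n}` with `c ∈ k` nonzero. -/
def IsMonomialPoly {k : Type*} [Field k] {n : ℕ} (p : MvPolynomial (Fin n) k) : Prop :=
  ∃ (c : k) (e : Fin n →₀ ℕ), c ≠ 0 ∧ p = monomial e c

/-- paper's Corollary 5.27. Let `k` be an infinite field, `n ≥ 1`, `l ≥ 2`,
and `I` an ideal with `⟨X_1,…,X_n⟩^l ⊆ I ⊆ ⟨X_1,…,X_n⟩²`.  Then `I` is generated by monomials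
if and only if for every `(a_1,…,a_n) ∈ (k^×)^n` the algebra endomorphism `X_i ↦ a_i X_i`
maps `I` into `I`. -/
theorem stmt_14 (k : Type*) [Field k] [Infinite k] (n l : ℕ) (hn : 1 ≤ n) (hl : 2 ≤ l)
    (I : Ideal (MvPolynomial (Fin n) k))
    (hIl : (Ideal.span (Set.range (X : Fin n → MvPolynomial (Fin n) k))) ^ l ≤ I)
    (hI2 : I ≤ (Ideal.span (Set.range (X : Fin n → MvPolynomial (Fin n) k))) ^ 2) :
    (∃ S : Set (MvPolynomial (Fin n) k),
        (∀ p ∈ S, IsMonomialPoly p) ∧ I = Ideal.span S) ↔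
    (∀ a : Fin n → kˣ, ∀ g ∈ I, aeval (fun i => (a i : k) • X i) g ∈ I) := by
  constructor
  · rintro ⟨S, hS, rfl⟩ a g hg
    induction hg using Submodule.span_induction with
    | mem p hp =>
      obtain ⟨c, e, hc, rfl⟩ := hS p hp
      rw [phi_monomial]
      have : (monomial e (chi a e * c) : MvPolynomial (Fin n) k)
          = C (chi a e) * monomial e c := by rw [C_mul_monomial]
      rw [this]
      exact Ideal.mul_mem_left _ _ (Ideal.subset_span hp)
    | zero => simp
    | add x y _ _ hx hy => rw [map_add]; exact add_mem hx hy
    | smul r x _ hx =>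
      rw [smul_eq_mul, map_mul]
      exact Ideal.mul_mem_left _ _ hx
  · intro hinv
    refine ⟨{p | IsMonomialPoly p ∧ p ∈ I}, fun p hp => hp.1, le_antisymm ?_ ?_⟩
    · intro f hf
      have hsum : ∑ v ∈ f.support, monomial v (coeff v f)
          ∈ Ideal.span {p : MvPolynomial (Fin n) k | IsMonomialPoly p ∧ p ∈ I} := by
        apply sum_mem
        intro e he
        exact Ideal.subset_span ⟨⟨coeff e f, e, mem_support_iff.mp he, rfl⟩,
          mono_mem I hinv f.support.card f le_rfl hf e he⟩
      rwa [support_sum_monomial_coeff] at hsum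
    · rw [Ideal.span_le]
      intro p hp
      exact hp.2
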